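/- Consider an n × n row-stochastic matrix A with Dobrushin coefficient σ(A) > 0, and a sequence of n × n row-stochastic matrices {A_k}_{k∈ℕ}. Fix ε ∈ (0,1) and set τ := σ(A)ε/(2n). If sup_{k∈ℕ} ‖A_k − A‖∞ ≤ τ, then for any probability vector μ₀ of dimension n, limsup_{k→∞} ‖μ₀A₀A₁⋯A_k − μ*‖₁ ≤ ε, where μ* is the unique probability vector satisfying μ* = μ*A. -/

import Mathlib

/-- The Dobrushin coefficient of a kernel `A` on a finite set `S`:
`σ(A) = min_{s,s'} Σ_t min(A s t, A s' t)`. -/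
noncomputable def dobrushin {S : Type*} [Fintype S] [Nonempty S] (A : S → S → ℝ) : ℝ :=
  ⨅ p : S × S, ∑ t, min (A p.1 t) (A p.2 t)


lemma dobrushin_le {S : Type*} [Fintype S] [Nonempty S] (A : S → S → ℝ) (u v : S) :
    dobrushin A ≤ ∑ t, min (A u t) (A v t) :=
  ciInf_le (Set.Finite.bddBelow (Set.finite_range _)) (u, v)

lemma dobrushin_le_one {S : Type*} [Fintype S] [Nonempty S] (A : S → S → ℝ)
    (hA1 : ∀ s, ∑ t, A s t = 1) : dobrushin A ≤ 1 := by
  obtain ⟨s⟩ := (inferInstance : Nonempty S)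
  have h := dobrushin_le A s s
  simpa [hA1 s] using h

lemma tv_contraction {S : Type*} [Fintype S] [Nonempty S] (A : S → S → ℝ)
    (hA0 : ∀ s t, 0 ≤ A s t) (hA1 : ∀ s, ∑ t, A s t = 1)
    (f : S → ℝ) (hf : ∑ s, f s = 0) :
    ∑ s', |∑ s, f s * A s s'| ≤ (1 - dobrushin A) * ∑ s, |f s| := by
  have hδ1 := dobrushin_le_one A hA1
  set fp : S → ℝ := fun s => max (f s) 0 with hfp
  set fn : S → ℝ := fun s => max (-f s) 0 with hfn
  have hfp0 : ∀ s, 0 ≤ fp s := fun s => le_max_right _ _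
  have hfn0 : ∀ s, 0 ≤ fn s := fun s => le_max_right _ _
  have hsplit : ∀ s, f s = fp s - fn s := by
    intro s; simp only [hfp, hfn]
    rcases le_total (f s) 0 with h | h
    · rw [max_eq_right h, max_eq_left (by linarith)]; ring
    · rw [max_eq_left h, max_eq_right (by linarith)]; ring
  have habs : ∀ s, |f s| = fp s + fn s := by
    intro s; simp only [hfp, hfn]
    rcases le_total (f s) 0 with h | h
    · rw [max_eq_right h, max_eq_left (by linarith), abs_of_nonpos h]; ring
    · rw [max_eq_left h, max_eq_right (by linarith), abs_of_nonneg h]; ring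
  set c : ℝ := ∑ s, fp s with hc
  have hc0 : 0 ≤ c := Finset.sum_nonneg fun s _ => hfp0 s
  have hfnsum : ∑ s, fn s = c := by
    have : ∑ s, (fp s - fn s) = 0 := by
      rw [← hf]; exact Finset.sum_congr rfl fun s _ => (hsplit s).symm
    rw [Finset.sum_sub_distrib] at this; linarith
  have habsum : ∑ s, |f s| = 2 * c := by
    rw [Finset.sum_congr rfl fun s _ => habs s, Finset.sum_add_distrib, hfnsum]; ring
  by_cases hczero : c = 0
  · have hfz : ∀ s, f s = 0 := by
      intro s
      have h1 : fp s = 0 := by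
        have h' : ∑ s, fp s = 0 := by rw [← hc]; exact hczero
        exact (Finset.sum_eq_zero_iff_of_nonneg (fun s _ => hfp0 s)).1 h' s (Finset.mem_univ s)
      have h2 : fn s = 0 := by
        have h' : ∑ s, fn s = 0 := by rw [hfnsum]; exact hczero
        exact (Finset.sum_eq_zero_iff_of_nonneg (fun s _ => hfn0 s)).1 h' s (Finset.mem_univ s)
      rw [hsplit s, h1, h2]; ring
    simp [hfz]
  have hcpos : 0 < c := lt_of_le_of_ne hc0 (Ne.symm hczero)
  have key : ∀ s', ∑ s, f s * A s s' =
      c⁻¹ * ∑ u, ∑ v, fp u * fn v * (A u s' - A v s') := by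
    intro s'
    have expand : ∑ u, ∑ v, fp u * fn v * (A u s' - A v s')
        = c * (∑ u, fp u * A u s') - c * (∑ v, fn v * A v s') := by
      calc ∑ u, ∑ v, fp u * fn v * (A u s' - A v s')
          = ∑ u, (fp u * A u s' * (∑ v, fn v) - fp u * ∑ v, fn v * A v s') := by
            refine Finset.sum_congr rfl fun u _ => ?_
            rw [Finset.mul_sum, Finset.mul_sum, ← Finset.sum_sub_distrib]
            exact Finset.sum_congr rfl fun v _ => by ring
        _ = (∑ u, fp u * A u s') * (∑ v, fn v) - (∑ u, fp u) * (∑ v, fn v * A v s') := by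
            rw [Finset.sum_sub_distrib, ← Finset.sum_mul, ← Finset.sum_mul]
        _ = c * (∑ u, fp u * A u s') - c * (∑ v, fn v * A v s') := by
            rw [hfnsum, ← hc]; ring
    have hlhs : ∑ s, f s * A s s' = (∑ u, fp u * A u s') - (∑ v, fn v * A v s') := by
      rw [← Finset.sum_sub_distrib]
      exact Finset.sum_congr rfl fun s _ => by rw [hsplit s]; ring
    rw [hlhs, expand]; field_simp
  have hAB : ∀ u v : S, ∑ s', |A u s' - A v s'| ≤ 2 * (1 - dobrushin A) := by
    intro u v
    have h1 : ∀ s', |A u s' - A v s'| = A u s' + A v s' - 2 * min (A u s') (A v s') := by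
      intro s'
      rcases le_total (A u s') (A v s') with h | h
      · rw [min_eq_left h, abs_of_nonpos (by linarith)]; ring
      · rw [min_eq_right h, abs_of_nonneg (by linarith)]; ring
    have h2 := dobrushin_le A u v
    calc ∑ s', |A u s' - A v s'|
        = ∑ s', (A u s' + A v s' - 2 * min (A u s') (A v s')) :=
          Finset.sum_congr rfl fun s' _ => h1 s'
      _ = (∑ s', A u s') + (∑ s', A v s') - 2 * ∑ s', min (A u s') (A v s') := by
          rw [Finset.sum_sub_distrib, Finset.sum_add_distrib, Finset.mul_sum]
      _ ≤ 2 * (1 - dobrushin A) := by rw [hA1 u, hA1 v]; linarith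
  calc ∑ s', |∑ s, f s * A s s'|
      = ∑ s', |c⁻¹ * ∑ u, ∑ v, fp u * fn v * (A u s' - A v s')| :=
        Finset.sum_congr rfl fun s' _ => by rw [key s']
    _ ≤ ∑ s', c⁻¹ * ∑ u, ∑ v, fp u * fn v * |A u s' - A v s'| := by
        refine Finset.sum_le_sum fun s' _ => ?_
        rw [abs_mul, abs_of_nonneg (inv_nonneg.2 hc0)]
        refine mul_le_mul_of_nonneg_left ?_ (inv_nonneg.2 hc0)
        calc |∑ u, ∑ v, fp u * fn v * (A u s' - A v s')|
            ≤ ∑ u, |∑ v, fp u * fn v * (A u s' - A v s')| := Finset.abs_sum_le_sum_abs _ _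
          _ ≤ ∑ u, ∑ v, |fp u * fn v * (A u s' - A v s')| :=
              Finset.sum_le_sum fun u _ => Finset.abs_sum_le_sum_abs _ _
          _ = ∑ u, ∑ v, fp u * fn v * |A u s' - A v s'| := by
              refine Finset.sum_congr rfl fun u _ => Finset.sum_congr rfl fun v _ => ?_
              rw [abs_mul, abs_mul, abs_of_nonneg (hfp0 u), abs_of_nonneg (hfn0 v)]
    _ = c⁻¹ * ∑ u, ∑ v, fp u * fn v * ∑ s', |A u s' - A v s'| := by
        rw [← Finset.mul_sum]
        congr 1
        rw [Finset.sum_comm]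
        refine Finset.sum_congr rfl fun u _ => ?_
        rw [Finset.sum_comm]
        exact Finset.sum_congr rfl fun v _ => (Finset.mul_sum _ _ _).symm
    _ ≤ c⁻¹ * ∑ u, ∑ v, fp u * fn v * (2 * (1 - dobrushin A)) := by
        refine mul_le_mul_of_nonneg_left ?_ (inv_nonneg.2 hc0)
        refine Finset.sum_le_sum fun u _ => Finset.sum_le_sum fun v _ => ?_
        exact mul_le_mul_of_nonneg_left (hAB u v) (mul_nonneg (hfp0 u) (hfn0 v))
    _ = (1 - dobrushin A) * ∑ s, |f s| := by
        have : ∑ u, ∑ v, fp u * fn v * (2 * (1 - dobrushin A))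
            = c * (c * (2 * (1 - dobrushin A))) := by
          calc ∑ u, ∑ v, fp u * fn v * (2 * (1 - dobrushin A))
              = ∑ u, fp u * ((∑ v, fn v) * (2 * (1 - dobrushin A))) := by
                refine Finset.sum_congr rfl fun u _ => ?_
                simp only [mul_assoc]
                rw [← Finset.mul_sum, ← Finset.sum_mul]
            _ = (∑ u, fp u) * ((∑ v, fn v) * (2 * (1 - dobrushin A))) := by
                rw [← Finset.sum_mul]
          rw [hfnsum, ← hc]
        rw [this, habsum]; field_simp

/-- Lemma 3 (Appendix A): let `A` be an `n × n` row-stochastic matrix with `σ(A) > 0`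
and `{A_k}` a sequence of row-stochastic matrices with
`sup_k ‖A_k − A‖∞ ≤ τ := σ(A) ε / (2n)` for some `ε ∈ (0,1)`. Then for any probability
vector `μ₀`, `limsup_k ‖μ₀ A₀ ⋯ A_k − μ*‖₁ ≤ ε`, where `μ*` is the unique probability
vector with `μ* = μ* A`. (Here `seq (k+1) = μ₀ A₀ ⋯ A_k`.) -/
theorem perturbed_products_close_to_stationary
    {S : Type*} [Fintype S] [Nonempty S]
    (A : S → S → ℝ) (hA0 : ∀ s t, 0 ≤ A s t) (hA1 : ∀ s, ∑ t, A s t = 1)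
    (hσ : 0 < dobrushin A)
    (Ak : ℕ → S → S → ℝ)
    (hAk0 : ∀ k s t, 0 ≤ Ak k s t) (hAk1 : ∀ k s, ∑ t, Ak k s t = 1)
    (ε : ℝ) (hε : ε ∈ Set.Ioo (0 : ℝ) 1)
    (τ : ℝ) (hτ : τ = dobrushin A * ε / (2 * (Fintype.card S : ℝ)))
    (hclose : ∀ k s t, |Ak k s t - A s t| ≤ τ)
    (μstar : S → ℝ) (hμstar0 : ∀ s, 0 ≤ μstar s) (hμstar1 : ∑ s, μstar s = 1)
    (hstat : ∀ s', ∑ s, μstar s * A s s' = μstar s')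
    (hstat_unique : ∀ ν : S → ℝ, (∀ s, 0 ≤ ν s) → (∑ s, ν s = 1) →
      (∀ s', ∑ s, ν s * A s s' = ν s') → ν = μstar)
    (μ0 : S → ℝ) (hμ00 : ∀ s, 0 ≤ μ0 s) (hμ01 : ∑ s, μ0 s = 1)
    (seq : ℕ → S → ℝ) (hseq0 : seq 0 = μ0)
    (hseq : ∀ k, seq (k + 1) = fun s' => ∑ s, seq k s * Ak k s s') :
    Filter.limsup (fun k : ℕ => ∑ s, |seq (k + 1) s - μstar s|) Filter.atTop ≤ ε := by
  obtain ⟨hε0, hε1⟩ := hε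
  set δ : ℝ := dobrushin A with hδdef
  have hδ1 : δ ≤ 1 := dobrushin_le_one A hA1
  have hn : (0:ℝ) < (Fintype.card S : ℝ) := by
    exact_mod_cast Fintype.card_pos
  have hprob : ∀ k, (∀ s, 0 ≤ seq k s) ∧ (∑ s, seq k s = 1) := by
    intro k
    induction k with
    | zero => rw [hseq0]; exact ⟨hμ00, hμ01⟩
    | succ k ih =>
      constructor
      · intro s
        rw [hseq k]
        exact Finset.sum_nonneg fun t _ => mul_nonneg (ih.1 t) (hAk0 k t s)
      · rw [hseq k]
        rw [Finset.sum_comm]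
        simp_rw [← Finset.mul_sum]
        simp only [hAk1 k, mul_one]
        exact ih.2
  set d : ℕ → ℝ := fun k => ∑ s, |seq k s - μstar s| with hd
  have hdnn : ∀ k, 0 ≤ d k := fun k => Finset.sum_nonneg fun s _ => abs_nonneg _
  have hrec : ∀ k, d (k+1) ≤ (1 - δ) * d k + δ * ε / 2 := by
    intro k
    have hsum0 : ∑ s, (seq k s - μstar s) = 0 := by
      rw [Finset.sum_sub_distrib, (hprob k).2, hμstar1]; ring
    have hcontr := tv_contraction A hA0 hA1 (fun s => seq k s - μstar s) hsum0
    have hdecomp : ∀ s', seq (k+1) s' - μstar s' =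
        (∑ s, seq k s * (Ak k s s' - A s s')) + ∑ s, (seq k s - μstar s) * A s s' := by
      intro s'
      rw [hseq k, ← hstat s', ← Finset.sum_sub_distrib, ← Finset.sum_add_distrib]
      exact Finset.sum_congr rfl fun s _ => by ring
    have hpert : ∑ s', |∑ s, seq k s * (Ak k s s' - A s s')| ≤ (Fintype.card S : ℝ) * τ := by
      calc ∑ s', |∑ s, seq k s * (Ak k s s' - A s s')|
          ≤ ∑ s' : S, ∑ s, seq k s * τ := by
            refine Finset.sum_le_sum fun s' _ => ?_
            calc |∑ s, seq k s * (Ak k s s' - A s s')|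
                ≤ ∑ s, |seq k s * (Ak k s s' - A s s')| := Finset.abs_sum_le_sum_abs _ _
              _ ≤ ∑ s, seq k s * τ := by
                  refine Finset.sum_le_sum fun s _ => ?_
                  rw [abs_mul, abs_of_nonneg ((hprob k).1 s)]
                  exact mul_le_mul_of_nonneg_left (hclose k s s') ((hprob k).1 s)
        _ = (Fintype.card S : ℝ) * τ := by
            have hst : ∀ s' : S, ∑ s, seq k s * τ = τ := by
              intro s'; rw [← Finset.sum_mul, (hprob k).2, one_mul]
            rw [Finset.sum_congr rfl fun s' _ => hst s', Finset.sum_const, Finset.card_univ,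
              nsmul_eq_mul]
    have hcard : (Fintype.card S : ℝ) * τ = δ * ε / 2 := by
      rw [hτ]; field_simp
    calc d (k+1) = ∑ s', |(∑ s, seq k s * (Ak k s s' - A s s'))
          + ∑ s, (seq k s - μstar s) * A s s'| :=
          Finset.sum_congr rfl fun s' _ => by rw [hdecomp s']
      _ ≤ ∑ s', (|∑ s, seq k s * (Ak k s s' - A s s')| + |∑ s, (seq k s - μstar s) * A s s'|) :=
          Finset.sum_le_sum fun s' _ => abs_add_le _ _
      _ = (∑ s', |∑ s, seq k s * (Ak k s s' - A s s')|)
          + ∑ s', |∑ s, (seq k s - μstar s) * A s s'| := Finset.sum_add_distrib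
      _ ≤ (Fintype.card S : ℝ) * τ + (1 - δ) * d k := add_le_add hpert hcontr
      _ = (1 - δ) * d k + δ * ε / 2 := by rw [hcard]; ring
  have hbound : ∀ k, d k ≤ 2 * (1 - δ)^k + ε / 2 := by
    intro k
    induction k with
    | zero =>
      have h2 : d 0 ≤ 2 := by
        calc d 0 = ∑ s, |μ0 s - μstar s| := by simp [hd, hseq0]
          _ ≤ ∑ s, (μ0 s + μstar s) := Finset.sum_le_sum fun s _ => by
              have h := abs_sub (μ0 s) (μstar s)
              rw [abs_of_nonneg (hμ00 s), abs_of_nonneg (hμstar0 s)] at h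
              exact h
          _ = 2 := by rw [Finset.sum_add_distrib, hμ01, hμstar1]; norm_num
      simp only [pow_zero, mul_one]
      linarith
    | succ k ih =>
      have h1δ : 0 ≤ 1 - δ := by linarith
      calc d (k+1) ≤ (1 - δ) * d k + δ * ε / 2 := hrec k
        _ ≤ (1 - δ) * (2 * (1 - δ)^k + ε / 2) + δ * ε / 2 :=
            add_le_add_left (mul_le_mul_of_nonneg_left ih h1δ) _
        _ = 2 * (1 - δ)^(k+1) + ε / 2 := by ring
  have htend : Filter.Tendsto (fun k : ℕ => (1 - δ)^k) Filter.atTop (nhds 0) := by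
    apply tendsto_pow_atTop_nhds_zero_of_lt_one <;> linarith
  have hev : ∀ᶠ k : ℕ in Filter.atTop, (fun k : ℕ => ∑ s, |seq (k + 1) s - μstar s|) k ≤ ε := by
    have h4 : (0:ℝ) < ε / 4 := by linarith
    have hev' : ∀ᶠ k : ℕ in Filter.atTop, (1 - δ)^(k+1) < ε / 4 := by
      have := (htend.comp (Filter.tendsto_add_atTop_nat 1)).eventually (gt_mem_nhds h4)
      simpa using this
    filter_upwards [hev'] with k hk
    have hb := hbound (k+1)
    show d (k+1) ≤ ε
    linarith
  refine Filter.limsup_le_of_le ?_ hev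
  refine Filter.IsBoundedUnder.isCoboundedUnder_le ?_
  refine Filter.isBoundedUnder_of ⟨0, fun k : ℕ => ?_⟩
  exact hdnn (k+1)
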